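/- Let W be a tetrahedral erasure channel and let (W_n)_{n≥0} be any sequence with W_0 = W and W_{n+1} ∈ {W_n^s, W_n^p} for every n. Then there exists a constant C > 0 such that A(W_n) ≤ C/n for all n ≥ 1; in other words, A(W_n) = O(1/n) along every path of descendants. -/
import Mathlib


noncomputable section

/-- A quintuple of reals representing a candidate tetrahedral erasure channel
`W = (p, q, r, s, t)`. -/
structure TECQuint where
  p : ℝ
  q : ℝ
  r : ℝ
  s : ℝ
  t : ℝ

namespace TECQuint

/-- `W` is a tetrahedral erasure channel: all five entries are nonnegative and sum to 1. -/
def IsTEC (W : TECQuint) : Prop :=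
  0 ≤ W.p ∧ 0 ≤ W.q ∧ 0 ≤ W.r ∧ 0 ≤ W.s ∧ 0 ≤ W.t ∧
    W.p + W.q + W.r + W.s + W.t = 1

/-- `W` is balanced: `q = r = s`. -/
def Balanced (W : TECQuint) : Prop := W.q = W.r ∧ W.r = W.s

/-- The serial child `W^s`. -/
def ser (W : TECQuint) : TECQuint where
  p := W.p ^ 2
  q := W.p * W.s + W.s * W.q + W.q * W.p
  r := W.p * W.q + W.q * W.r + W.r * W.p
  s := W.p * W.r + W.r * W.s + W.s * W.p
  t := 1 - (W.p ^ 2 + (W.p * W.s + W.s * W.q + W.q * W.p)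
      + (W.p * W.q + W.q * W.r + W.r * W.p)
      + (W.p * W.r + W.r * W.s + W.s * W.p))

/-- The parallel child `W^p`. -/
def par (W : TECQuint) : TECQuint where
  p := 1 - ((W.t * W.s + W.s * W.q + W.q * W.t)
      + (W.t * W.q + W.q * W.r + W.r * W.t)
      + (W.t * W.r + W.r * W.s + W.s * W.t) + W.t ^ 2)
  q := W.t * W.s + W.s * W.q + W.q * W.t
  r := W.t * W.q + W.q * W.r + W.r * W.t
  s := W.t * W.r + W.r * W.s + W.s * W.t
  t := W.t ^ 2

/-- The moment of inertia `A(W) = (q−r)² + (r−s)² + (s−q)²`. -/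
def inertia (W : TECQuint) : ℝ :=
  (W.q - W.r) ^ 2 + (W.r - W.s) ^ 2 + (W.s - W.q) ^ 2

/-- The (conditional) entropy `H(W) = (q+r+s)/2 + t`. -/
def entropy (W : TECQuint) : ℝ := (W.q + W.r + W.s) / 2 + W.t

/-- The edge mass `E(W) = q + r + s`. -/
def edgeMass (W : TECQuint) : ℝ := W.q + W.r + W.s

/-- The Quetelet index `Q(W) = E(W) / (H(W)(1−H(W)))`. -/
def quetelet (W : TECQuint) : ℝ :=
  edgeMass W / (entropy W * (1 - entropy W))

/-- One step of the channel process: `true` picks the serial child, `false` the parallel child. -/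
def child (W : TECQuint) (b : Bool) : TECQuint := if b then ser W else par W

/-- The descendant `W^c` of `W` along the string `c ∈ {s,p}^n`. -/
def descend : TECQuint → {n : ℕ} → (Fin n → Bool) → TECQuint
  | W, 0, _ => W
  | W, _ + 1, c => descend (child W (c 0)) (fun i => c i.succ)

end TECQuint

open TECQuint

lemma cube_ineq (x y z : ℝ) (hx : 0 ≤ x) (hy : 0 ≤ y) (hz : 0 ≤ z) :
    (x^2+y^2+z^2)^3 ≤ 3*(x^3+y^3+z^3)^2 := by
  have h1 : (x^2+y^2+z^2)^2 ≤ (x^3+y^3+z^3)*(x+y+z) := by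
    nlinarith [mul_nonneg (mul_nonneg hx hy) (sq_nonneg (x-y)),
      mul_nonneg (mul_nonneg hy hz) (sq_nonneg (y-z)),
      mul_nonneg (mul_nonneg hx hz) (sq_nonneg (x-z))]
  have h2 : (x+y+z)^2 ≤ 3*(x^2+y^2+z^2) := by
    nlinarith [sq_nonneg (x-y), sq_nonneg (y-z), sq_nonneg (x-z)]
  have h4 : 0 ≤ x^2+y^2+z^2 := by positivity
  rcases eq_or_lt_of_le h4 with h | h
  · nlinarith []
  · have := mul_le_mul h1 h1 (by positivity) (by positivity)
    nlinarith [mul_le_mul_of_nonneg_left h2 (sq_nonneg (x^3+y^3+z^3)), sq_nonneg ((x^3+y^3+z^3)*(x+y+z))]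

lemma step_ser (W : TECQuint) (h : W.IsTEC) :
    inertia (ser W) ≤ inertia W ∧ (inertia W)^3 ≤ 3*(inertia W - inertia (ser W))^2 := by
  obtain ⟨hp, hq, hr, hs, ht, hsum⟩ := h
  set d1 := W.q - W.r with hd1
  set d2 := W.r - W.s with hd2
  set d3 := W.s - W.q with hd3
  have hA : inertia W = d1^2 + d2^2 + d3^2 := by simp only [inertia, hd1, hd2, hd3]
  have hA' : inertia (ser W) =
      (W.p+W.q)^2*d2^2 + (W.p+W.r)^2*d3^2 + (W.p+W.s)^2*d1^2 := by
    simp only [inertia, ser, hd1, hd2, hd3]; ring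
  -- bounds on factors
  have habs2 : |d2| ≤ W.r + W.s := abs_le.mpr ⟨by linarith, by linarith⟩
  have habs3 : |d3| ≤ W.s + W.q := abs_le.mpr ⟨by linarith, by linarith⟩
  have habs1 : |d1| ≤ W.q + W.r := abs_le.mpr ⟨by linarith, by linarith⟩
  have k2 : (W.p+W.q)^2*d2^2 ≤ d2^2 - |d2|^3 := by
    have hfac : |d2| ≤ 1 - (W.p+W.q)^2 := by
      nlinarith [mul_nonneg (add_nonneg hp hq) (show (0:ℝ) ≤ 1 - (W.p+W.q) by linarith)]
    have h3 : |d2|^3 ≤ (1 - (W.p+W.q)^2) * d2^2 := by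
      calc |d2|^3 = |d2| * d2^2 := by rw [← sq_abs]; ring
        _ ≤ (1 - (W.p+W.q)^2) * d2^2 := mul_le_mul_of_nonneg_right hfac (sq_nonneg _)
    linarith [h3]
  have k3 : (W.p+W.r)^2*d3^2 ≤ d3^2 - |d3|^3 := by
    have hfac : |d3| ≤ 1 - (W.p+W.r)^2 := by
      nlinarith [mul_nonneg (add_nonneg hp hr) (show (0:ℝ) ≤ 1 - (W.p+W.r) by linarith)]
    have h3 : |d3|^3 ≤ (1 - (W.p+W.r)^2) * d3^2 := by
      calc |d3|^3 = |d3| * d3^2 := by rw [← sq_abs]; ring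
        _ ≤ (1 - (W.p+W.r)^2) * d3^2 := mul_le_mul_of_nonneg_right hfac (sq_nonneg _)
    linarith [h3]
  have k1 : (W.p+W.s)^2*d1^2 ≤ d1^2 - |d1|^3 := by
    have hfac : |d1| ≤ 1 - (W.p+W.s)^2 := by
      nlinarith [mul_nonneg (add_nonneg hp hs) (show (0:ℝ) ≤ 1 - (W.p+W.s) by linarith)]
    have h3 : |d1|^3 ≤ (1 - (W.p+W.s)^2) * d1^2 := by
      calc |d1|^3 = |d1| * d1^2 := by rw [← sq_abs]; ring
        _ ≤ (1 - (W.p+W.s)^2) * d1^2 := mul_le_mul_of_nonneg_right hfac (sq_nonneg _)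
    linarith [h3]
  have hS : inertia W - inertia (ser W) ≥ |d1|^3 + |d2|^3 + |d3|^3 := by
    rw [hA, hA']; linarith
  have hSnn : 0 ≤ |d1|^3 + |d2|^3 + |d3|^3 := by positivity
  constructor
  · linarith [pow_nonneg (abs_nonneg d1) 3, pow_nonneg (abs_nonneg d2) 3,
      pow_nonneg (abs_nonneg d3) 3]
  · have hc := cube_ineq |d1| |d2| |d3| (abs_nonneg _) (abs_nonneg _) (abs_nonneg _)
    rw [sq_abs, sq_abs, sq_abs] at hc
    have hsq : (|d1|^3 + |d2|^3 + |d3|^3)^2 ≤ (inertia W - inertia (ser W))^2 :=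
      pow_le_pow_left₀ hSnn hS 2
    calc (inertia W)^3 = (d1^2 + d2^2 + d3^2)^3 := by rw [hA]
      _ ≤ 3*(|d1|^3 + |d2|^3 + |d3|^3)^2 := hc
      _ ≤ 3*(inertia W - inertia (ser W))^2 := by linarith

lemma step_par (W : TECQuint) (h : W.IsTEC) :
    inertia (par W) ≤ inertia W ∧ (inertia W)^3 ≤ 3*(inertia W - inertia (par W))^2 := by
  obtain ⟨hp, hq, hr, hs, ht, hsum⟩ := h
  set d1 := W.q - W.r with hd1
  set d2 := W.r - W.s with hd2
  set d3 := W.s - W.q with hd3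
  have hA : inertia W = d1^2 + d2^2 + d3^2 := by simp only [inertia, hd1, hd2, hd3]
  have hA' : inertia (par W) =
      (W.t+W.q)^2*d2^2 + (W.t+W.r)^2*d3^2 + (W.t+W.s)^2*d1^2 := by
    simp only [inertia, par, hd1, hd2, hd3]; ring
  -- bounds on factors
  have habs2 : |d2| ≤ W.r + W.s := abs_le.mpr ⟨by linarith, by linarith⟩
  have habs3 : |d3| ≤ W.s + W.q := abs_le.mpr ⟨by linarith, by linarith⟩
  have habs1 : |d1| ≤ W.q + W.r := abs_le.mpr ⟨by linarith, by linarith⟩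
  have k2 : (W.t+W.q)^2*d2^2 ≤ d2^2 - |d2|^3 := by
    have hfac : |d2| ≤ 1 - (W.t+W.q)^2 := by
      nlinarith [mul_nonneg (add_nonneg ht hq) (show (0:ℝ) ≤ 1 - (W.t+W.q) by linarith)]
    have h3 : |d2|^3 ≤ (1 - (W.t+W.q)^2) * d2^2 := by
      calc |d2|^3 = |d2| * d2^2 := by rw [← sq_abs]; ring
        _ ≤ (1 - (W.t+W.q)^2) * d2^2 := mul_le_mul_of_nonneg_right hfac (sq_nonneg _)
    linarith [h3]
  have k3 : (W.t+W.r)^2*d3^2 ≤ d3^2 - |d3|^3 := by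
    have hfac : |d3| ≤ 1 - (W.t+W.r)^2 := by
      nlinarith [mul_nonneg (add_nonneg ht hr) (show (0:ℝ) ≤ 1 - (W.t+W.r) by linarith)]
    have h3 : |d3|^3 ≤ (1 - (W.t+W.r)^2) * d3^2 := by
      calc |d3|^3 = |d3| * d3^2 := by rw [← sq_abs]; ring
        _ ≤ (1 - (W.t+W.r)^2) * d3^2 := mul_le_mul_of_nonneg_right hfac (sq_nonneg _)
    linarith [h3]
  have k1 : (W.t+W.s)^2*d1^2 ≤ d1^2 - |d1|^3 := by
    have hfac : |d1| ≤ 1 - (W.t+W.s)^2 := by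
      nlinarith [mul_nonneg (add_nonneg ht hs) (show (0:ℝ) ≤ 1 - (W.t+W.s) by linarith)]
    have h3 : |d1|^3 ≤ (1 - (W.t+W.s)^2) * d1^2 := by
      calc |d1|^3 = |d1| * d1^2 := by rw [← sq_abs]; ring
        _ ≤ (1 - (W.t+W.s)^2) * d1^2 := mul_le_mul_of_nonneg_right hfac (sq_nonneg _)
    linarith [h3]
  have hS : inertia W - inertia (par W) ≥ |d1|^3 + |d2|^3 + |d3|^3 := by
    rw [hA, hA']; linarith
  have hSnn : 0 ≤ |d1|^3 + |d2|^3 + |d3|^3 := by positivity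
  constructor
  · linarith [pow_nonneg (abs_nonneg d1) 3, pow_nonneg (abs_nonneg d2) 3,
      pow_nonneg (abs_nonneg d3) 3]
  · have hc := cube_ineq |d1| |d2| |d3| (abs_nonneg _) (abs_nonneg _) (abs_nonneg _)
    rw [sq_abs, sq_abs, sq_abs] at hc
    have hsq : (|d1|^3 + |d2|^3 + |d3|^3)^2 ≤ (inertia W - inertia (par W))^2 :=
      pow_le_pow_left₀ hSnn hS 2
    calc (inertia W)^3 = (d1^2 + d2^2 + d3^2)^3 := by rw [hA]
      _ ≤ 3*(|d1|^3 + |d2|^3 + |d3|^3)^2 := hc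
      _ ≤ 3*(inertia W - inertia (par W))^2 := by linarith


lemma isTEC_ser (W : TECQuint) (h : W.IsTEC) : (ser W).IsTEC := by
  obtain ⟨hp, hq, hr, hs, ht, hsum⟩ := h
  refine ⟨by simp only [ser]; positivity,
    by simp only [ser]; nlinarith [mul_nonneg hp hs, mul_nonneg hs hq, mul_nonneg hq hp],
    by simp only [ser]; nlinarith [mul_nonneg hp hq, mul_nonneg hq hr, mul_nonneg hr hp],
    by simp only [ser]; nlinarith [mul_nonneg hp hr, mul_nonneg hr hs, mul_nonneg hs hp],
    ?_, by simp only [ser]; ring⟩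
  simp only [ser]
  nlinarith [mul_nonneg ht (show (0:ℝ) ≤ 2 - W.t by linarith),
    mul_nonneg hq hr, mul_nonneg hr hs, mul_nonneg hs hq,
    sq_nonneg (W.q + W.r + W.s), mul_nonneg hp hq, mul_nonneg hp hr, mul_nonneg hp hs]

lemma isTEC_par (W : TECQuint) (h : W.IsTEC) : (par W).IsTEC := by
  obtain ⟨hp, hq, hr, hs, ht, hsum⟩ := h
  refine ⟨?_,
    by simp only [par]; nlinarith [mul_nonneg ht hs, mul_nonneg hs hq, mul_nonneg hq ht],
    by simp only [par]; nlinarith [mul_nonneg ht hq, mul_nonneg hq hr, mul_nonneg hr ht],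
    by simp only [par]; nlinarith [mul_nonneg ht hr, mul_nonneg hr hs, mul_nonneg hs ht],
    by simp only [par]; positivity, by simp only [par]; ring⟩
  simp only [par]
  nlinarith [mul_nonneg hp (show (0:ℝ) ≤ 2 - W.p by linarith),
    mul_nonneg hq hr, mul_nonneg hr hs, mul_nonneg hs hq,
    sq_nonneg (W.q + W.r + W.s), mul_nonneg ht hq, mul_nonneg ht hr, mul_nonneg ht hs]

lemma inertia_le_three (W : TECQuint) (h : W.IsTEC) : inertia W ≤ 3 := by
  obtain ⟨hp, hq, hr, hs, ht, hsum⟩ := h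
  simp only [inertia]
  nlinarith [mul_nonneg hq hr, mul_nonneg hr hs, mul_nonneg hs hq,
    mul_nonneg hq hq, mul_nonneg hr hr, mul_nonneg hs hs,
    sq_nonneg (W.q + W.r), sq_nonneg (W.r + W.s), sq_nonneg (W.s + W.q)]

lemma inertia_nonneg (W : TECQuint) : 0 ≤ inertia W := by
  simp only [inertia]; positivity


theorem ultimate_loss_of_inertia (W : TECQuint) (hW : W.IsTEC)
    (Wseq : ℕ → TECQuint) (h0 : Wseq 0 = W)
    (hstep : ∀ n : ℕ, Wseq (n + 1) = ser (Wseq n) ∨ Wseq (n + 1) = par (Wseq n)) :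
    ∃ C : ℝ, 0 < C ∧ ∀ n : ℕ, 1 ≤ n → inertia (Wseq n) ≤ C / n := by
  refine ⟨7, by norm_num, ?_⟩
  have hTEC : ∀ n, (Wseq n).IsTEC := by
    intro n
    induction n with
    | zero => rw [h0]; exact hW
    | succ n ih =>
      rcases hstep n with h | h
      · rw [h]; exact isTEC_ser _ ih
      · rw [h]; exact isTEC_par _ ih
  have hkey : ∀ n, inertia (Wseq (n+1)) ≤ inertia (Wseq n) ∧
      (inertia (Wseq n))^3 ≤ 3*(inertia (Wseq n) - inertia (Wseq (n+1)))^2 := by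
    intro n
    rcases hstep n with h | h
    · rw [h]; exact step_ser _ (hTEC n)
    · rw [h]; exact step_par _ (hTEC n)
  intro n hn
  induction n with
  | zero => omega
  | succ n ih =>
    rcases Nat.eq_zero_or_pos n with rfl | hn1
    · have := inertia_le_three _ (hTEC 1)
      norm_num
      linarith
    · have ihn := ih hn1
      by_contra hc
      push_neg at hc
      obtain ⟨hmono, hcube⟩ := hkey n
      set a := inertia (Wseq n) with ha
      set b := inertia (Wseq (n+1)) with hb
      set x := (n : ℝ) with hx
      have hx1 : (1:ℝ) ≤ x := by rw [hx]; exact_mod_cast hn1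
      have hx0 : (0:ℝ) < x := by linarith
      have hxx : (0:ℝ) < x + 1 := by linarith
      have hcast : ((n+1 : ℕ) : ℝ) = x + 1 := by push_cast [hx]; ring
      rw [hcast] at hc
      rw [hx] at ihn
      -- hc : 7/(x+1) < b, ihn : a ≤ 7/x, hmono : b ≤ a
      have hab : 0 ≤ a - b := by linarith
      have hsplit : 7/x - 7/(x+1) = 7/(x*(x+1)) := by field_simp; ring
      have habu : a - b ≤ 7/(x*(x+1)) := by
        rw [← hsplit]; linarith
      have h5 : (a-b)^2 ≤ (7/(x*(x+1)))^2 := by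
        apply pow_le_pow_left₀ hab habu
      have hbpos : 0 < 7/(x+1) := by positivity
      have h6 : (7/(x+1))^3 ≤ a^3 := by
        apply pow_le_pow_left₀ (le_of_lt hbpos) (by linarith)
      have h7 : (7/(x+1))^3 ≤ 3*(7/(x*(x+1)))^2 := by
        calc (7/(x+1))^3 ≤ a^3 := h6
          _ ≤ 3*(a-b)^2 := hcube
          _ ≤ 3*(7/(x*(x+1)))^2 := by linarith
      have h7m := mul_le_mul_of_nonneg_right h7
        (show (0:ℝ) ≤ (x+1)^3 * (x*(x+1))^2 by positivity)
      have eL : (7/(x+1))^3 * ((x+1)^3 * (x*(x+1))^2) = 343 * (x*(x+1))^2 := by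
        field_simp; ring
      have eR : 3*(7/(x*(x+1)))^2 * ((x+1)^3 * (x*(x+1))^2) = 147 * (x+1)^3 := by
        field_simp; ring
      rw [eL, eR] at h7m
      have hpos : 0 < (x+1)^2 * (343*x^2 - 147*x - 147) := by
        have h1 : (0:ℝ) < 343*x^2 - 147*x - 147 := by nlinarith [sq_nonneg (x-1)]
        positivity
      nlinarith [h7m, hpos]
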